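/- For n ≥ 2 and real x > (4/5)·n², one has x^{n−2} + ⌊n/2⌋·⌊(n−1)/2⌋·x^{n−3} > C(n−1,2)·x^{n−3} + C(n−1,4)·x^{n−5} + C(n−1,6)·x^{n−7} + ⋯ (sum over even k ≥ 2 with n−1−k ≥ 0 of C(n−1,k)·x^{n−1−k}). -/

import Mathlib

lemma aux_choose_bound (m : ℕ) : ∀ j : ℕ, 1 ≤ j →
    m.choose (2 * j) * 12 ^ (j - 1) ≤ m.choose 2 * (m ^ 2) ^ (j - 1) := by
  intro j hj
  induction j, hj using Nat.le_induction with
  | base => simp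
  | succ j hj ih =>
    have step : m.choose (2 * (j + 1)) * 12 ≤ m.choose (2 * j) * m ^ 2 := by
      have h1 := Nat.choose_succ_right_eq m (2 * j + 1)
      have h2 := Nat.choose_succ_right_eq m (2 * j)
      have e1 : m.choose (2 * (j + 1)) * ((2 * j + 2) * (2 * j + 1)) =
          m.choose (2 * j) * ((m - 2 * j) * (m - (2 * j + 1))) := by
        have : 2 * (j + 1) = (2 * j + 1) + 1 := by ring
        rw [this]
        calc m.choose ((2 * j + 1) + 1) * ((2 * j + 2) * (2 * j + 1))
            = (m.choose ((2 * j + 1) + 1) * (2 * j + 2)) * (2 * j + 1) := by ring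
          _ = (m.choose (2 * j + 1) * (m - (2 * j + 1))) * (2 * j + 1) := by rw [h1]
          _ = (m.choose (2 * j + 1) * (2 * j + 1)) * (m - (2 * j + 1)) := by ring
          _ = (m.choose (2 * j) * (m - 2 * j)) * (m - (2 * j + 1)) := by rw [h2]
          _ = m.choose (2 * j) * ((m - 2 * j) * (m - (2 * j + 1))) := by ring
      have h12 : 12 ≤ (2 * j + 2) * (2 * j + 1) := by nlinarith
      calc m.choose (2 * (j + 1)) * 12
          ≤ m.choose (2 * (j + 1)) * ((2 * j + 2) * (2 * j + 1)) :=
            Nat.mul_le_mul_left _ h12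
        _ = m.choose (2 * j) * ((m - 2 * j) * (m - (2 * j + 1))) := e1
        _ ≤ m.choose (2 * j) * (m * m) := by
            apply Nat.mul_le_mul_left
            exact Nat.mul_le_mul (Nat.sub_le _ _) (Nat.sub_le _ _)
        _ = m.choose (2 * j) * m ^ 2 := by ring
    have hsub : j + 1 - 1 = (j - 1) + 1 := by omega
    calc m.choose (2 * (j + 1)) * 12 ^ (j + 1 - 1)
        = (m.choose (2 * (j + 1)) * 12) * 12 ^ (j - 1) := by rw [hsub, pow_succ]; ring
      _ ≤ (m.choose (2 * j) * m ^ 2) * 12 ^ (j - 1) := Nat.mul_le_mul_right _ step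
      _ = m ^ 2 * (m.choose (2 * j) * 12 ^ (j - 1)) := by ring
      _ ≤ m ^ 2 * (m.choose 2 * (m ^ 2) ^ (j - 1)) := Nat.mul_le_mul_left _ ih
      _ = m.choose 2 * (m ^ 2) ^ (j + 1 - 1) := by rw [hsub, pow_succ]; ring

lemma aux_geo_bound : ∀ k : ℕ, ∑ i ∈ Finset.range k, (5 / 48 : ℝ) ^ i ≤ 48 / 43 := by
  intro k
  induction k with
  | zero => norm_num
  | succ k ih =>
    rw [Finset.sum_range_succ']
    have : ∑ i ∈ Finset.range k, (5 / 48 : ℝ) ^ (i + 1) =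
        (5 / 48) * ∑ i ∈ Finset.range k, (5 / 48 : ℝ) ^ i := by
      rw [Finset.mul_sum]
      exact Finset.sum_congr rfl fun i _ => by ring
    rw [this]
    norm_num
    linarith

theorem ineq_three (n : ℕ) (hn : 2 ≤ n) (x : ℝ) (hx : x > 4 / 5 * (n : ℝ) ^ 2) :
    x ^ (n - 2) + ((n / 2 : ℕ) : ℝ) * (((n - 1) / 2 : ℕ) : ℝ) * x ^ (n - 3) >
      ∑ j ∈ Finset.Icc 1 ((n - 1) / 2),
        ((n - 1).choose (2 * j) : ℝ) * x ^ (n - 1 - 2 * j) := by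
  have hn4 : (2 : ℝ) ≤ (n : ℝ) := by exact_mod_cast hn
  have hx0 : (0 : ℝ) < x := lt_of_le_of_lt (by positivity) hx
  rcases Nat.lt_or_ge n 3 with h3 | h3
  · -- n = 2
    interval_cases n
    simp [show (2 - 1) / 2 = 0 from rfl]
  -- n ≥ 3
  have hn3 : (3 : ℝ) ≤ (n : ℝ) := by exact_mod_cast h3
  set C2 : ℝ := ((n - 1).choose 2 : ℝ) with hC2
  -- termwise bound
  have hterm : ∀ j ∈ Finset.Icc 1 ((n - 1) / 2),
      ((n - 1).choose (2 * j) : ℝ) * x ^ (n - 1 - 2 * j) ≤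
        C2 * x ^ (n - 3) * (5 / 48) ^ (j - 1) := by
    intro j hj
    rw [Finset.mem_Icc] at hj
    obtain ⟨hj1, hj2⟩ := hj
    have h2j : 2 * j ≤ n - 1 := by omega
    have hsplit : n - 3 = (n - 1 - 2 * j) + 2 * (j - 1) := by omega
    have hchoose := aux_choose_bound (n - 1) j hj1
    have hchooseR : ((n - 1).choose (2 * j) : ℝ) * 12 ^ (j - 1) ≤
        C2 * (((n - 1 : ℕ) : ℝ) ^ 2) ^ (j - 1) := by
      rw [hC2]
      exact_mod_cast hchoose
    have hm : ((n - 1 : ℕ) : ℝ) ≤ (n : ℝ) := by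
      have : (n - 1 : ℕ) ≤ n := Nat.sub_le _ _
      exact_mod_cast this
    have hm0 : (0 : ℝ) ≤ ((n - 1 : ℕ) : ℝ) := Nat.cast_nonneg _
    -- key: m^2 / 12 ≤ (5/48) x^2 , i.e. m^2 * 48 ≤ 5 * 12 * x^2... prove m^2 ≤ (5/48)*x^2*12
    have hkey : ((n - 1 : ℕ) : ℝ) ^ 2 ≤ 12 * (5 / 48 * x ^ 2) := by
      have hx1 : (1 : ℝ) ≤ x := by nlinarith
      nlinarith [sq_nonneg ((n : ℝ) - ((n - 1 : ℕ) : ℝ))]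
    have hstep : (((n - 1 : ℕ) : ℝ) ^ 2) ^ (j - 1) ≤ (12 : ℝ) ^ (j - 1) * (5 / 48 * x ^ 2) ^ (j - 1) := by
      rw [← mul_pow]
      exact pow_le_pow_left₀ (by positivity) hkey _
    have hC2nn : (0 : ℝ) ≤ C2 := Nat.cast_nonneg _
    have hcomb : ((n - 1).choose (2 * j) : ℝ) * 12 ^ (j - 1) ≤
        C2 * ((12 : ℝ) ^ (j - 1) * (5 / 48 * x ^ 2) ^ (j - 1)) :=
      le_trans hchooseR (by
        apply mul_le_mul_of_nonneg_left hstep hC2nn)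
    have h12pos : (0 : ℝ) < (12 : ℝ) ^ (j - 1) := by positivity
    have hbound : ((n - 1).choose (2 * j) : ℝ) ≤ C2 * (5 / 48 * x ^ 2) ^ (j - 1) := by
      have := (mul_le_mul_iff_of_pos_right h12pos).mp (by linarith [hcomb] : ((n - 1).choose (2 * j) : ℝ) * 12 ^ (j - 1) ≤ (C2 * (5 / 48 * x ^ 2) ^ (j - 1)) * 12 ^ (j - 1))
      exact this
    calc ((n - 1).choose (2 * j) : ℝ) * x ^ (n - 1 - 2 * j)
        ≤ (C2 * (5 / 48 * x ^ 2) ^ (j - 1)) * x ^ (n - 1 - 2 * j) := by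
          apply mul_le_mul_of_nonneg_right hbound (by positivity)
      _ = C2 * x ^ (n - 3) * (5 / 48) ^ (j - 1) := by
          rw [hsplit, pow_add, pow_mul, mul_pow]
          ring
  have hsum1 := Finset.sum_le_sum hterm
  have hsum2 : ∑ j ∈ Finset.Icc 1 ((n - 1) / 2), C2 * x ^ (n - 3) * (5 / 48 : ℝ) ^ (j - 1) ≤
      C2 * x ^ (n - 3) * (48 / 43) := by
    rw [← Finset.mul_sum]
    apply mul_le_mul_of_nonneg_left _ (by positivity)
    have : ∑ j ∈ Finset.Icc 1 ((n - 1) / 2), (5 / 48 : ℝ) ^ (j - 1) =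
        ∑ i ∈ Finset.range ((n - 1) / 2), (5 / 48 : ℝ) ^ i := by
      rw [show Finset.Icc 1 ((n - 1) / 2) = Finset.Ico 1 ((n - 1) / 2 + 1) from rfl,
        Finset.sum_Ico_eq_sum_range]
      simp
    rw [this]
    exact aux_geo_bound _
  -- final scalar inequality
  have hF : ((n : ℝ) - 1) * ((n : ℝ) - 2) ≤ 4 * (((n / 2 : ℕ) : ℝ) * (((n - 1) / 2 : ℕ) : ℝ)) := by
    have h1 : n - 1 ≤ 2 * (n / 2) := by omega
    have h2 : n - 2 ≤ 2 * ((n - 1) / 2) := by omega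
    have : (n - 1) * (n - 2) ≤ (2 * (n / 2)) * (2 * ((n - 1) / 2)) := Nat.mul_le_mul h1 h2
    have hcast : (((n - 1) * (n - 2) : ℕ) : ℝ) ≤ (((2 * (n / 2)) * (2 * ((n - 1) / 2)) : ℕ) : ℝ) := by
      exact_mod_cast this
    push_cast at hcast
    rw [Nat.cast_sub (by omega), Nat.cast_sub (by omega)] at hcast
    push_cast at hcast
    linarith
  have hC2eq : C2 = ((n : ℝ) - 1) * ((n : ℝ) - 2) / 2 := by
    rw [hC2, Nat.cast_choose_two, Nat.cast_sub (by omega)]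
    push_cast
    ring
  have hkey2 : C2 * (48 / 43) < x + ((n / 2 : ℕ) : ℝ) * (((n - 1) / 2 : ℕ) : ℝ) := by
    rw [hC2eq]
    nlinarith
  have hx3 : (0 : ℝ) < x ^ (n - 3) := by positivity
  have hpow : x ^ (n - 2) = x * x ^ (n - 3) := by
    rw [← pow_succ']
    congr 1
    omega
  have hfin := mul_lt_mul_of_pos_right hkey2 hx3
  rw [hpow]
  calc ∑ j ∈ Finset.Icc 1 ((n - 1) / 2), ((n - 1).choose (2 * j) : ℝ) * x ^ (n - 1 - 2 * j)
      ≤ C2 * x ^ (n - 3) * (48 / 43) := le_trans hsum1 hsum2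
    _ = C2 * (48 / 43) * x ^ (n - 3) := by ring
    _ < (x + ((n / 2 : ℕ) : ℝ) * (((n - 1) / 2 : ℕ) : ℝ)) * x ^ (n - 3) := hfin
    _ = x * x ^ (n - 3) + ((n / 2 : ℕ) : ℝ) * (((n - 1) / 2 : ℕ) : ℝ) * x ^ (n - 3) := by ring
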